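/- Let 0 < δ, γ, ξ, p < 1 with 2γ² ≤ δ ξ² p². Let Γ be a graph with finite nonempty vertex subsets X₀, X₁, …, X_m such that for each i = 1, …, m, the pair (X_{i−1}, X_i)_Γ is (p, (1−δ)γ √(|X_{i−1}||X_i|))-jumbled. Then there exist subsets X̃_i ⊆ X_i with |X̃_i| ≥ (1−δ)|X_i| for every i such that for every 0 ≤ i ≤ m−1, every vertex x ∈ X̃_i satisfies |E_{y∈X̃_{i+1}}[Γ(x,y)] − p| ≤ ξ p, and the induced bipartite graph (X̃_i, X̃_{i+1})_Γ is (p, γ√(|X̃_i||X̃_{i+1}|))-jumbled. -/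

import Mathlib

/-- `(p, γ√(|A||B|))`-jumbledness of the pair `(A, B)` in the graph `Γ`,
in functional form. -/
def Jumbled {V : Type*} (Γ : V → V → ℝ) (A B : Finset V) (p γ : ℝ) : Prop :=
  ∀ u v : V → ℝ, (∀ x, 0 ≤ u x ∧ u x ≤ 1) → (∀ y, 0 ≤ v y ∧ v y ≤ 1) →
    |(∑ x ∈ A, ∑ y ∈ B, (Γ x y - p) * u x * v y) / ((A.card : ℝ) * (B.card : ℝ))|
      ≤ γ * Real.sqrt ((∑ x ∈ A, u x) / (A.card : ℝ)) *
          Real.sqrt ((∑ y ∈ B, v y) / (B.card : ℝ))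

open Finset


lemma sum_restrict1 {V : Type*} {A A' : Finset V} (hA : A' ⊆ A) (u : V → ℝ) :
    ∑ x ∈ A, (A' : Set V).indicator u x = ∑ x ∈ A', u x := by
  rw [← Finset.sum_subset hA (fun x _ hx => Set.indicator_of_notMem (by simpa using hx) u)]
  exact Finset.sum_congr rfl fun x hx => Set.indicator_of_mem (by simpa using hx) u

lemma sum_restrict2 {V : Type*} {A A' B B' : Finset V} (hA : A' ⊆ A) (hB : B' ⊆ B)
    (f : V → V → ℝ) (u v : V → ℝ) :
    ∑ x ∈ A, ∑ y ∈ B, f x y * (A' : Set V).indicator u x * (B' : Set V).indicator v y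
      = ∑ x ∈ A', ∑ y ∈ B', f x y * u x * v y := by
  rw [← Finset.sum_subset hA (fun x _ hx => by
    simp only [Set.indicator_of_notMem (show x ∉ (A' : Set V) by simpa using hx), mul_zero,
      zero_mul, Finset.sum_const_zero])]
  refine Finset.sum_congr rfl fun x hx => ?_
  rw [← Finset.sum_subset hB (fun y _ hy => by
    rw [Set.indicator_of_notMem (show y ∉ (B' : Set V) by simpa using hy), mul_zero])]
  exact Finset.sum_congr rfl fun y hy => by
    rw [Set.indicator_of_mem (by simpa using hx) u, Set.indicator_of_mem (by simpa using hy) v]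

lemma sqrt_div_mul {x c : ℝ} (hx : 0 ≤ x) (hc : 0 < c) :
    Real.sqrt (x / c) * c = Real.sqrt x * Real.sqrt c := by
  have h := Real.mul_self_sqrt hc.le
  have hsc : Real.sqrt c ≠ 0 := by positivity
  rw [Real.sqrt_div hx]
  field_simp
  rw [Real.sq_sqrt hc.le]

lemma indicator_mem_Icc {V : Type*} (S : Finset V) (u : V → ℝ) (hu : ∀ x, 0 ≤ u x ∧ u x ≤ 1) :
    ∀ x, 0 ≤ (S : Set V).indicator u x ∧ (S : Set V).indicator u x ≤ 1 := by
  classical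
  intro x
  by_cases h : x ∈ (S : Set V)
  · rw [Set.indicator_of_mem h]; exact hu x
  · rw [Set.indicator_of_notMem h]; norm_num

lemma bad_bound {V : Type*} {δ γ ξ p : ℝ} (hδ1 : δ < 1)
    (hγ0 : 0 < γ) (hξ0 : 0 < ξ) (hp0 : 0 < p)
    {Γ : V → V → ℝ} {A B B' S : Finset V} (hA : A.Nonempty) (hB : B.Nonempty)
    (hB'B : B' ⊆ B) (hB'card : (1 - δ) * (B.card : ℝ) ≤ (B'.card : ℝ))
    (hSA : S ⊆ A)
    (hj : Jumbled Γ A B p ((1 - δ) * γ))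
    (hlow : ξ * p * (B'.card : ℝ) * (S.card : ℝ)
      ≤ |∑ x ∈ S, ∑ y ∈ B', (Γ x y - p)|) :
    (S.card : ℝ) ≤ (1 - δ) * γ ^ 2 * (A.card : ℝ) / (ξ ^ 2 * p ^ 2) := by
  have h1δ : (0:ℝ) < 1 - δ := by linarith
  have hAc : (0:ℝ) < A.card := by exact_mod_cast Finset.card_pos.mpr hA
  have hBc : (0:ℝ) < B.card := by exact_mod_cast Finset.card_pos.mpr hB
  have hb : (0:ℝ) < B'.card := lt_of_lt_of_le (by positivity) hB'card
  set k : ℝ := (S.card : ℝ) with hk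
  have hk0 : (0:ℝ) ≤ k := by positivity
  rcases eq_or_lt_of_le hk0 with hk' | hkpos
  · rw [← hk']; positivity
  -- apply jumbledness with indicators
  have H := hj ((S : Set V).indicator (fun _ => 1)) ((B' : Set V).indicator (fun _ => 1))
    (indicator_mem_Icc S _ (fun _ => by norm_num))
    (indicator_mem_Icc B' _ (fun _ => by norm_num))
  rw [show (∑ x ∈ A, ∑ y ∈ B, (Γ x y - p) * (S : Set V).indicator (fun _ => 1) x *
        (B' : Set V).indicator (fun _ => 1) y)
      = ∑ x ∈ S, ∑ y ∈ B', (Γ x y - p) * 1 * 1 from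
      sum_restrict2 hSA hB'B _ _ _,
    sum_restrict1 hSA, sum_restrict1 hB'B] at H
  simp only [mul_one, Finset.sum_const, nsmul_eq_mul] at H
  rw [abs_div, abs_of_pos (by positivity : (0:ℝ) < (A.card : ℝ) * (B.card : ℝ)),
    div_le_iff₀ (by positivity)] at H
  have key : ξ * p * (B'.card : ℝ) * k ≤
      (1 - δ) * γ * Real.sqrt k * Real.sqrt (B'.card : ℝ)
        * (Real.sqrt (A.card : ℝ) * Real.sqrt (B.card : ℝ)) := by
    calc ξ * p * (B'.card : ℝ) * k ≤ |∑ x ∈ S, ∑ y ∈ B', (Γ x y - p)| := hlow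
      _ ≤ (1 - δ) * γ * Real.sqrt (k / (A.card : ℝ)) *
            Real.sqrt ((B'.card : ℝ) / (B.card : ℝ)) * ((A.card : ℝ) * (B.card : ℝ)) := H
      _ = (1 - δ) * γ * (Real.sqrt (k / (A.card : ℝ)) * (A.card : ℝ)) *
            (Real.sqrt ((B'.card : ℝ) / (B.card : ℝ)) * (B.card : ℝ)) := by ring
      _ = _ := by rw [sqrt_div_mul hk0 hAc, sqrt_div_mul hb.le hBc]; ring
  -- square the inequality
  have hsqk : Real.sqrt k * Real.sqrt k = k := Real.mul_self_sqrt hk0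
  have hsqb : Real.sqrt (B'.card : ℝ) * Real.sqrt (B'.card : ℝ) = (B'.card : ℝ) :=
    Real.mul_self_sqrt hb.le
  have hsqA : Real.sqrt (A.card : ℝ) * Real.sqrt (A.card : ℝ) = (A.card : ℝ) :=
    Real.mul_self_sqrt hAc.le
  have hsqB : Real.sqrt (B.card : ℝ) * Real.sqrt (B.card : ℝ) = (B.card : ℝ) :=
    Real.mul_self_sqrt hBc.le
  have hsq : (ξ * p * (B'.card : ℝ) * k) ^ 2 ≤
      ((1 - δ) * γ) ^ 2 * k * (B'.card : ℝ) * ((A.card : ℝ) * (B.card : ℝ)) := by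
    calc (ξ * p * (B'.card : ℝ) * k) ^ 2
        ≤ ((1 - δ) * γ * Real.sqrt k * Real.sqrt (B'.card : ℝ)
            * (Real.sqrt (A.card : ℝ) * Real.sqrt (B.card : ℝ))) ^ 2 :=
          pow_le_pow_left₀ (by positivity) key 2
      _ = ((1 - δ) * γ) ^ 2 * (Real.sqrt k * Real.sqrt k)
            * (Real.sqrt (B'.card : ℝ) * Real.sqrt (B'.card : ℝ))
            * ((Real.sqrt (A.card : ℝ) * Real.sqrt (A.card : ℝ))
              * (Real.sqrt (B.card : ℝ) * Real.sqrt (B.card : ℝ))) := by ring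
      _ = _ := by rw [hsqk, hsqb, hsqA, hsqB]
  -- divide by k * B'.card
  have h3 : ξ ^ 2 * p ^ 2 * (B'.card : ℝ) * k ≤ ((1 - δ) * γ) ^ 2 * ((A.card : ℝ) * (B.card : ℝ)) := by
    have hkb : (0:ℝ) < k * (B'.card : ℝ) := by positivity
    refine le_of_mul_le_mul_right ?_ hkb
    calc ξ ^ 2 * p ^ 2 * (B'.card : ℝ) * k * (k * (B'.card : ℝ))
        = (ξ * p * (B'.card : ℝ) * k) ^ 2 := by ring
      _ ≤ ((1 - δ) * γ) ^ 2 * k * (B'.card : ℝ) * ((A.card : ℝ) * (B.card : ℝ)) := hsq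
      _ = ((1 - δ) * γ) ^ 2 * ((A.card : ℝ) * (B.card : ℝ)) * (k * (B'.card : ℝ)) := by ring
  -- use B'.card ≥ (1-δ) B.card
  rw [le_div_iff₀ (by positivity)]
  refine le_of_mul_le_mul_right ?_ (show (0:ℝ) < (1 - δ) * (B.card : ℝ) by positivity)
  calc k * (ξ ^ 2 * p ^ 2) * ((1 - δ) * (B.card : ℝ))
      ≤ k * (ξ ^ 2 * p ^ 2) * (B'.card : ℝ) := by
        exact mul_le_mul_of_nonneg_left (by linarith) (by positivity)
    _ = ξ ^ 2 * p ^ 2 * (B'.card : ℝ) * k := by ring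
    _ ≤ ((1 - δ) * γ) ^ 2 * ((A.card : ℝ) * (B.card : ℝ)) := h3
    _ = (1 - δ) * γ ^ 2 * (A.card : ℝ) * ((1 - δ) * (B.card : ℝ)) := by ring

lemma step {V : Type*} {δ γ ξ p : ℝ} (hδ0 : 0 < δ) (hδ1 : δ < 1)
    (hγ0 : 0 < γ) (hξ0 : 0 < ξ) (hp0 : 0 < p)
    (hcond : 2 * γ ^ 2 ≤ δ * ξ ^ 2 * p ^ 2)
    (Γ : V → V → ℝ) {A B B' : Finset V} (hA : A.Nonempty) (hB : B.Nonempty)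
    (hB'B : B' ⊆ B) (hB'card : (1 - δ) * (B.card : ℝ) ≤ (B'.card : ℝ))
    (hj : Jumbled Γ A B p ((1 - δ) * γ)) :
    ∃ A' : Finset V, A' ⊆ A ∧ (1 - δ) * (A.card : ℝ) ≤ (A'.card : ℝ) ∧
      (∀ x ∈ A', |(∑ y ∈ B', Γ x y) / ((B'.card : ℝ)) - p| ≤ ξ * p) ∧
      Jumbled Γ A' B' p γ := by
  classical
  have h1δ : (0:ℝ) < 1 - δ := by linarith
  have hAc : (0:ℝ) < A.card := by exact_mod_cast Finset.card_pos.mpr hA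
  have hBc : (0:ℝ) < B.card := by exact_mod_cast Finset.card_pos.mpr hB
  have hb : (0:ℝ) < B'.card := lt_of_lt_of_le (by positivity) hB'card
  set b : ℝ := (B'.card : ℝ) with hbdef
  set d : V → ℝ := fun x => ∑ y ∈ B', (Γ x y - p) with hd
  set A' : Finset V := A.filter (fun x => |d x| ≤ ξ * p * b) with hA'
  have hA'A : A' ⊆ A := Finset.filter_subset _ _
  -- bad sets
  set Sp : Finset V := A.filter (fun x => ξ * p * b < d x) with hSp
  set Sm : Finset V := A.filter (fun x => d x < -(ξ * p * b)) with hSm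
  have hSpA : Sp ⊆ A := Finset.filter_subset _ _
  have hSmA : Sm ⊆ A := Finset.filter_subset _ _
  have hKp : (Sp.card : ℝ) ≤ (1 - δ) * γ ^ 2 * (A.card : ℝ) / (ξ ^ 2 * p ^ 2) := by
    refine bad_bound hδ1 hγ0 hξ0 hp0 hA hB hB'B hB'card hSpA hj ?_
    calc ξ * p * b * (Sp.card : ℝ) = (Sp.card : ℝ) * (ξ * p * b) := by ring
      _ ≤ ∑ x ∈ Sp, d x := by
          have := Finset.card_nsmul_le_sum Sp d (ξ * p * b)
            (fun x hx => le_of_lt (Finset.mem_filter.mp hx).2)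
          simpa [nsmul_eq_mul] using this
      _ ≤ |∑ x ∈ Sp, ∑ y ∈ B', (Γ x y - p)| := le_abs_self _
  have hKm : (Sm.card : ℝ) ≤ (1 - δ) * γ ^ 2 * (A.card : ℝ) / (ξ ^ 2 * p ^ 2) := by
    refine bad_bound hδ1 hγ0 hξ0 hp0 hA hB hB'B hB'card hSmA hj ?_
    have h1 : ∑ x ∈ Sm, d x ≤ (Sm.card : ℝ) * (-(ξ * p * b)) := by
      have := Finset.sum_le_card_nsmul Sm d (-(ξ * p * b))
        (fun x hx => le_of_lt (Finset.mem_filter.mp hx).2)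
      simpa [nsmul_eq_mul] using this
    calc ξ * p * b * (Sm.card : ℝ) = -((Sm.card : ℝ) * (-(ξ * p * b))) := by ring
      _ ≤ -(∑ x ∈ Sm, d x) := by linarith
      _ ≤ |∑ x ∈ Sm, ∑ y ∈ B', (Γ x y - p)| := neg_le_abs _
  -- card bound for A'
  have hdiff : A \ A' ⊆ Sp ∪ Sm := by
    intro x hx
    rcases Finset.mem_sdiff.mp hx with ⟨hxA, hxA'⟩
    have hc : ξ * p * b < |d x| :=
      not_le.mp (fun h => hxA' (Finset.mem_filter.mpr ⟨hxA, h⟩))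
    rcases lt_abs.mp hc with h | h
    · exact Finset.mem_union_left _ (Finset.mem_filter.mpr ⟨hxA, h⟩)
    · exact Finset.mem_union_right _ (Finset.mem_filter.mpr ⟨hxA, by linarith⟩)
  have hcardA' : (1 - δ) * (A.card : ℝ) ≤ (A'.card : ℝ) := by
    have h1 : ((A \ A').card : ℝ) ≤ (Sp.card : ℝ) + (Sm.card : ℝ) := by
      have := le_trans (Finset.card_le_card hdiff) (Finset.card_union_le Sp Sm)
      exact_mod_cast this
    have h2 : ((A \ A').card : ℝ) + (A'.card : ℝ) = (A.card : ℝ) := by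
      exact_mod_cast Finset.card_sdiff_add_card_eq_card hA'A
    have h3 : 2 * ((1 - δ) * γ ^ 2 * (A.card : ℝ) / (ξ ^ 2 * p ^ 2)) ≤ δ * (A.card : ℝ) := by
      rw [show 2 * ((1 - δ) * γ ^ 2 * (A.card:ℝ) / (ξ ^ 2 * p ^ 2))
          = 2 * ((1 - δ) * γ ^ 2 * (A.card:ℝ)) / (ξ ^ 2 * p ^ 2) from by ring,
        div_le_iff₀ (by positivity)]
      nlinarith [mul_le_mul_of_nonneg_right hcond hAc.le,
        mul_nonneg (mul_nonneg hδ0.le (sq_nonneg γ)) hAc.le]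
    linarith
  have hA'c : (0:ℝ) < (A'.card : ℝ) := lt_of_lt_of_le (by positivity) hcardA'
  refine ⟨A', hA'A, hcardA', ?_, ?_⟩
  · -- degree condition
    intro x hx
    have hxd : |d x| ≤ ξ * p * b := (Finset.mem_filter.mp hx).2
    have hdx : d x = (∑ y ∈ B', Γ x y) - b * p := by
      simp [hd, Finset.sum_sub_distrib, hbdef, mul_comm]
    have : (∑ y ∈ B', Γ x y) / b - p = d x / b := by
      rw [hdx]; field_simp
    rw [this, abs_div, abs_of_pos hb, div_le_iff₀ hb]
    exact hxd
  · -- jumbledness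
    intro u v hu hv
    set Su : ℝ := ∑ x ∈ A', u x with hSu
    set Sv : ℝ := ∑ y ∈ B', v y with hSv
    have hSu0 : 0 ≤ Su := Finset.sum_nonneg fun x _ => (hu x).1
    have hSv0 : 0 ≤ Sv := Finset.sum_nonneg fun y _ => (hv y).1
    have H := hj ((A' : Set V).indicator u) ((B' : Set V).indicator v)
      (indicator_mem_Icc A' u hu) (indicator_mem_Icc B' v hv)
    rw [sum_restrict2 hA'A hB'B, sum_restrict1 hA'A, sum_restrict1 hB'B] at H
    rw [abs_div, abs_of_pos (show (0:ℝ) < (A.card : ℝ) * (B.card : ℝ) by positivity),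
      div_le_iff₀ (by positivity)] at H
    set N : ℝ := ∑ x ∈ A', ∑ y ∈ B', (Γ x y - p) * u x * v y with hN
    rw [abs_div, abs_of_pos (show (0:ℝ) < (A'.card : ℝ) * (B'.card : ℝ) by positivity),
      div_le_iff₀ (by positivity)]
    have hkey : (1 - δ) * (Real.sqrt (A.card : ℝ) * Real.sqrt (B.card : ℝ)) ≤
        Real.sqrt (A'.card : ℝ) * Real.sqrt (B'.card : ℝ) := by
      have e1 : Real.sqrt ((1 - δ) * (A.card : ℝ)) * Real.sqrt ((1 - δ) * (B.card : ℝ))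
          = (1 - δ) * (Real.sqrt (A.card : ℝ) * Real.sqrt (B.card : ℝ)) := by
        rw [Real.sqrt_mul h1δ.le, Real.sqrt_mul h1δ.le,
          show Real.sqrt (1-δ) * Real.sqrt (A.card : ℝ) *
            (Real.sqrt (1-δ) * Real.sqrt (B.card : ℝ))
            = Real.sqrt (1-δ) * Real.sqrt (1-δ) *
              (Real.sqrt (A.card : ℝ) * Real.sqrt (B.card : ℝ)) from by ring,
          Real.mul_self_sqrt h1δ.le]
      rw [← e1]
      exact mul_le_mul (Real.sqrt_le_sqrt hcardA') (Real.sqrt_le_sqrt hB'card)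
        (Real.sqrt_nonneg _) (Real.sqrt_nonneg _)
    calc |N| ≤ (1 - δ) * γ * Real.sqrt (Su / (A.card : ℝ)) *
          Real.sqrt (Sv / (B.card : ℝ)) * ((A.card : ℝ) * (B.card : ℝ)) := H
      _ = (1 - δ) * γ * (Real.sqrt (Su / (A.card : ℝ)) * (A.card : ℝ)) *
          (Real.sqrt (Sv / (B.card : ℝ)) * (B.card : ℝ)) := by ring
      _ = γ * Real.sqrt Su * Real.sqrt Sv *
          ((1 - δ) * (Real.sqrt (A.card : ℝ) * Real.sqrt (B.card : ℝ))) := by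
          rw [sqrt_div_mul hSu0 hAc, sqrt_div_mul hSv0 hBc]; ring
      _ ≤ γ * Real.sqrt Su * Real.sqrt Sv *
          (Real.sqrt (A'.card : ℝ) * Real.sqrt (B'.card : ℝ)) := by
          exact mul_le_mul_of_nonneg_left hkey (by positivity)
      _ = γ * (Real.sqrt Su * Real.sqrt (A'.card : ℝ)) *
          (Real.sqrt Sv * Real.sqrt (B'.card : ℝ)) := by ring
      _ = γ * (Real.sqrt (Su / (A'.card : ℝ)) * (A'.card : ℝ)) *
          (Real.sqrt (Sv / (B'.card : ℝ)) * (B'.card : ℝ)) := by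
          rw [sqrt_div_mul hSu0 hA'c, sqrt_div_mul hSv0 hb]
      _ = γ * Real.sqrt (Su / (A'.card : ℝ)) * Real.sqrt (Sv / (B'.card : ℝ)) *
          ((A'.card : ℝ) * (B'.card : ℝ)) := by ring

lemma aux {V : Type*} {δ γ ξ p : ℝ} (hδ0 : 0 < δ) (hδ1 : δ < 1)
    (hγ0 : 0 < γ) (hξ0 : 0 < ξ) (hp0 : 0 < p)
    (hcond : 2 * γ ^ 2 ≤ δ * ξ ^ 2 * p ^ 2) (Γ : V → V → ℝ) :
    ∀ (m : ℕ) (X : Fin (m + 1) → Finset V), (∀ i, (X i).Nonempty) →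
    (∀ i : Fin m, Jumbled Γ (X i.castSucc) (X i.succ) p ((1 - δ) * γ)) →
    ∃ Xt : Fin (m + 1) → Finset V,
      (∀ i, Xt i ⊆ X i ∧ (1 - δ) * ((X i).card : ℝ) ≤ ((Xt i).card : ℝ)) ∧
      ∀ i : Fin m,
        (∀ x ∈ Xt i.castSucc,
          |(∑ y ∈ Xt i.succ, Γ x y) / (((Xt i.succ).card : ℝ)) - p| ≤ ξ * p) ∧
        Jumbled Γ (Xt i.castSucc) (Xt i.succ) p γ := by
  intro m
  induction m with
  | zero =>
      intro X hX _
      refine ⟨X, fun i => ⟨subset_rfl, ?_⟩, fun i => i.elim0⟩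
      have : (0:ℝ) ≤ ((X i).card : ℝ) := by positivity
      nlinarith
  | succ m ih =>
      intro X hX hjumb
      obtain ⟨Xt', hXt'sub, hXt'pair⟩ := ih (fun i => X i.succ) (fun i => hX i.succ)
        (fun i => by
          have := hjumb i.succ
          rwa [← Fin.succ_castSucc] at this)
      -- build level 0
      have hj0 : Jumbled Γ (X 0) (X 1) p ((1 - δ) * γ) := by
        have := hjumb 0
        simpa using this
      have hB'B : Xt' 0 ⊆ X 1 := by
        have := (hXt'sub 0).1
        simpa using this
      have hB'card : (1 - δ) * ((X 1).card : ℝ) ≤ ((Xt' 0).card : ℝ) := by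
        have := (hXt'sub 0).2
        simpa using this
      obtain ⟨A', hA'sub, hA'card, hA'deg, hA'jumb⟩ :=
        step hδ0 hδ1 hγ0 hξ0 hp0 hcond Γ (hX 0) (hX 1) hB'B hB'card hj0
      refine ⟨Fin.cases A' Xt', ?_, ?_⟩
      · intro i
        induction i using Fin.cases with
        | zero => exact ⟨hA'sub, hA'card⟩
        | succ j => simpa using hXt'sub j
      · intro i
        induction i using Fin.cases with
        | zero =>
            constructor
            · intro x hx
              have hx' : x ∈ A' := by simpa using hx
              have := hA'deg x hx'
              have h01 : (Fin.cases A' Xt' : Fin (m+2) → Finset V) 1 = Xt' 0 := rfl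
              simpa [h01] using this
            · have h01 : (Fin.cases A' Xt' : Fin (m+2) → Finset V) 1 = Xt' 0 := rfl
              simpa [h01] using hA'jumb
        | succ j =>
            have := hXt'pair j
            constructor
            · intro x hx
              have h1 : (Fin.cases A' Xt' : Fin (m+2) → Finset V) (Fin.castSucc (Fin.succ j))
                  = Xt' j.castSucc := by
                rw [← Fin.succ_castSucc]
                simp
              have h2 : (Fin.cases A' Xt' : Fin (m+2) → Finset V) (Fin.succ (Fin.succ j))
                  = Xt' j.succ := by simp
              rw [h1] at hx
              rw [h2]
              exact this.1 x hx
            · have h1 : (Fin.cases A' Xt' : Fin (m+2) → Finset V) (Fin.castSucc (Fin.succ j))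
                  = Xt' j.castSucc := by
                rw [← Fin.succ_castSucc]
                simp
              have h2 : (Fin.cases A' Xt' : Fin (m+2) → Finset V) (Fin.succ (Fin.succ j))
                  = Xt' j.succ := by simp
              rw [h1, h2]
              exact this.2

theorem stmt_11 {V : Type*} [Fintype V] {m : ℕ}
    (δ γ ξ p : ℝ) (hδ0 : 0 < δ) (hδ1 : δ < 1) (hγ0 : 0 < γ) (hγ1 : γ < 1)
    (hξ0 : 0 < ξ) (hξ1 : ξ < 1) (hp0 : 0 < p) (hp1 : p < 1)
    (hcond : 2 * γ ^ 2 ≤ δ * ξ ^ 2 * p ^ 2)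
    (Γ : V → V → ℝ) (hΓ01 : ∀ x y, Γ x y = 0 ∨ Γ x y = 1) (hΓsymm : ∀ x y, Γ x y = Γ y x)
    (X : Fin (m + 1) → Finset V) (hX : ∀ i, (X i).Nonempty)
    (hjumb : ∀ i : Fin m, Jumbled Γ (X i.castSucc) (X i.succ) p ((1 - δ) * γ)) :
    ∃ Xt : Fin (m + 1) → Finset V,
      (∀ i, Xt i ⊆ X i ∧ (1 - δ) * ((X i).card : ℝ) ≤ ((Xt i).card : ℝ)) ∧
      ∀ i : Fin m,
        (∀ x ∈ Xt i.castSucc,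
          |(∑ y ∈ Xt i.succ, Γ x y) / (((Xt i.succ).card : ℝ)) - p| ≤ ξ * p) ∧
        Jumbled Γ (Xt i.castSucc) (Xt i.succ) p γ := by
  exact aux hδ0 hδ1 hγ0 hξ0 hp0 hcond Γ m X hX hjumb
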